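/- Let F be a field and c₁, …, c_m nonzero elements of F, and let B = (b_{ij}) be an m×(number of mutable indices) integer matrix. Define the mutation in direction k by c'_k = (∏_{b_{ik}>0} c_i^{b_{ik}} + ∏_{b_{ik}<0} c_i^{−b_{ik}}) / c_k, assuming c'_k ≠ 0. Then applying the cluster mutation (c, B) ↦ (μ_k(c), μ_k(B)) twice in the same direction k returns the original pair (c, B). -/
import Mathlib


/-- Cluster mutation (of both the cluster and the exchange matrix) in a fixed
direction `k` is an involution.  Here `c : Fin m → F` is the cluster (all entries
nonzero), `B` is the integer exchange matrix with mutable directions indexed by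
`Fin q` embedded in `Fin m` via `e`, `B (e k) k = 0` (no loops at `k`), and the
mutated variable `c'_k = (∏_{b_{ik}>0} c_i^{b_{ik}} + ∏_{b_{ik}<0} c_i^{-b_{ik}})/c_k`
is assumed nonzero.  Then mutating twice in direction `k` returns `(c, B)`. -/
theorem stmt_12 {F : Type*} [Field F] {m q : ℕ}
    (e : Fin q → Fin m) (he : Function.Injective e)
    (c : Fin m → F) (hc : ∀ i, c i ≠ 0)
    (B : Matrix (Fin m) (Fin q) ℤ) (k : Fin q)
    (hdiag : B (e k) k = 0)
    (hnew :
      (∏ l, c l ^ (B l k).toNat + ∏ l, c l ^ (-(B l k)).toNat) / c (e k) ≠ 0) :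
    let μB : Matrix (Fin m) (Fin q) ℤ → Matrix (Fin m) (Fin q) ℤ := fun B' =>
      Matrix.of fun i j =>
        if i = e k ∨ j = k then -B' i j
        else B' i j + (|B' i k| * B' (e k) j + B' i k * |B' (e k) j|) / 2
    let μc : Matrix (Fin m) (Fin q) ℤ → (Fin m → F) → (Fin m → F) := fun B' c' =>
      fun i =>
        if i = e k then
          (∏ l, c' l ^ (B' l k).toNat + ∏ l, c' l ^ (-(B' l k)).toNat) / c' (e k)
        else c' i
    μc (μB B) (μc B c) = c ∧ μB (μB B) = B := by
  intro μB μc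
  have hsum : (∏ l, c l ^ (B l k).toNat + ∏ l, c l ^ (-(B l k)).toNat) ≠ 0 := by
    intro h; apply hnew; rw [h, zero_div]
  constructor
  · funext i
    by_cases hi : i = e k
    · subst hi
      simp only [μc, μB, Matrix.of_apply, if_pos rfl]
      have hB' : ∀ l, (if l = e k ∨ k = k then -B l k
          else B l k + (|B l k| * B (e k) k + B l k * |B (e k) k|) / 2) = -B l k := by
        intro l; simp
      have key : ∀ (E : Fin m → ℕ), E (e k) = 0 →
          (∏ l, (if l = e k then
            (∏ l, c l ^ (B l k).toNat + ∏ l, c l ^ (-(B l k)).toNat) / c (e k)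
            else c l) ^ E l) = ∏ l, c l ^ E l := by
        intro E hE
        refine Finset.prod_congr rfl fun l _ => ?_
        by_cases hl : l = e k
        · subst hl; simp [hE]
        · simp [hl]
      simp only [or_true, if_true, neg_neg]
      rw [key _ (by simp [hdiag]), key _ (by simp [hdiag])]
      rw [add_comm (∏ l, c l ^ (-(B l k)).toNat)]
      rw [div_div_eq_mul_div, mul_comm, mul_div_assoc, div_self hsum, mul_one]
    · simp only [μc, if_neg hi]
  · funext i j
    simp only [μB, Matrix.of_apply]
    by_cases h : i = e k ∨ j = k
    · rw [if_pos h, if_pos h, neg_neg]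
    · simp only [Matrix.of_apply, if_neg h, eq_self_iff_true, or_true, true_or,
        if_true, abs_neg]
      set x := B i k; set y := B (e k) j
      have hdvd : (2:ℤ) ∣ (|x| * y + x * |y|) := by
        rcases abs_choice x with hx | hx <;> rcases abs_choice y with hy | hy <;>
          rw [hx, hy] <;> ring_nf <;> omega
      obtain ⟨d, hd⟩ := hdvd
      have : |x| * -y + -x * |y| = -(2*d) := by rw [← hd]; ring
      rw [this, hd]
      omega
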